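/- arXiv:2205.09633 — 2 statements merged into one kernel-verified Lean document; each statement's English description precedes it below -/
import Mathlib

section
/- Under conditional independence of T and C given X = x, the conditional subdistribution H₁^x(t) = P(Y ≤ t, Δ = 1 | X = x) satisfies H₁^x(t) = ∫_{[0,t]} (1 − Q^x_−(u)) dF^x(u), where Q^x_− denotes the left-continuous version of Q^x. -/
open MeasureTheory ProbabilityTheory Set Filter Topology

lemma leftLim_cdf_eq (ρ : Measure ℝ) [IsProbabilityMeasure ρ] (Q : ℝ → ℝ)
    (hQ : ∀ t, Q t = (ρ (Set.Iic t)).toReal) (u : ℝ) :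
    Function.leftLim Q u = (ρ (Set.Iio u)).toReal := by
  have hmono : Monotone Q := by
    intro a b hab
    rw [hQ, hQ]
    exact ENNReal.toReal_mono (measure_ne_top ρ _) (measure_mono (Iic_subset_Iic.2 hab))
  set s : ℕ → ℝ := fun n => u - 1 / (n + 1) with hs_def
  have hs_lt : ∀ n, s n < u := fun n => by
    have : (0 : ℝ) < 1 / (n + 1) := by positivity
    simp [hs_def]; linarith
  have hs_tendsto : Tendsto s atTop (𝓝[<] u) := by
    apply tendsto_nhdsWithin_of_tendsto_nhds_of_eventually_within
    · have h0 : Tendsto (fun n : ℕ => 1 / ((n : ℝ) + 1)) atTop (𝓝 0) :=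
        tendsto_one_div_add_atTop_nhds_zero_nat
      have h1 := (tendsto_const_nhds (x := u) (f := (atTop : Filter ℕ))).sub h0
      rw [sub_zero] at h1
      exact h1
    · exact Eventually.of_forall fun n => hs_lt n
  have h1 : Tendsto (fun n => Q (s n)) atTop (𝓝 (Function.leftLim Q u)) :=
    (hmono.tendsto_leftLim u).comp hs_tendsto
  have hsmono : Monotone fun n : ℕ => Set.Iic (s n) := by
    intro m n hmn
    apply Iic_subset_Iic.2
    have hcast : (m : ℝ) + 1 ≤ (n : ℝ) + 1 := by exact_mod_cast Nat.succ_le_succ hmn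
    have : (1 : ℝ) / (n + 1) ≤ 1 / (m + 1) :=
      one_div_le_one_div_of_le (by positivity) hcast
    simp only [hs_def]; linarith
  have hunion : Set.Iio u = ⋃ n, Set.Iic (s n) := by
    ext x
    simp only [mem_Iio, mem_iUnion, mem_Iic]
    constructor
    · intro hx
      obtain ⟨n, hn⟩ := exists_nat_one_div_lt (sub_pos.2 hx)
      exact ⟨n, by simp only [hs_def]; linarith⟩
    · rintro ⟨n, hn⟩
      exact lt_of_le_of_lt hn (hs_lt n)
  have h2 : Tendsto (fun n => ρ (Set.Iic (s n))) atTop (𝓝 (ρ (Set.Iio u))) := by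
    rw [hunion]
    exact tendsto_measure_iUnion_atTop hsmono
  have h3 : Tendsto (fun n => (ρ (Set.Iic (s n))).toReal) atTop (𝓝 (ρ (Set.Iio u)).toReal) :=
    (ENNReal.tendsto_toReal (measure_ne_top ρ _)).comp h2
  have : (fun n => Q (s n)) = fun n => (ρ (Set.Iic (s n))).toReal := by
    funext n; exact hQ (s n)
  rw [this] at h1
  exact tendsto_nhds_unique h1 h3

/-- Under (conditional) independence of `T` and `C`, the subdistribution
`H₁(t) = P(Y ≤ t, Δ = 1)` of `(Y, Δ) = (min(T,C), 1{T ≤ C})` satisfies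
`H₁(t) = ∫_{[0,t]} (1 − Q₋(u)) dF(u)`, where `F` is the law of `T` (so `dF` is the measure
`μ.map T`) and `Q₋` is the left-continuous version of the CDF `Q` of `C`. -/
theorem stmt_3 {Ω : Type*} [MeasurableSpace Ω] (μ : Measure Ω) [IsProbabilityMeasure μ]
    (T C : Ω → ℝ) (hT : Measurable T) (hC : Measurable C)
    (hT_nonneg : ∀ ω, 0 ≤ T ω) (hC_nonneg : ∀ ω, 0 ≤ C ω)
    (h_indep : IndepFun T C μ)
    (Q Qm H₁ : ℝ → ℝ)
    (hQ : ∀ t, Q t = (μ {ω | C ω ≤ t}).toReal)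
    (hQm : ∀ u, Qm u = Function.leftLim Q u)
    (hH₁ : ∀ t, H₁ t = (μ {ω | min (T ω) (C ω) ≤ t ∧ T ω ≤ C ω}).toReal) :
    ∀ t, H₁ t = ∫ u in Set.Icc 0 t, (1 - Qm u) ∂(Measure.map T μ) := by
  intro t
  set ν := μ.map T with hν_def
  set ρ := μ.map C with hρ_def
  haveI : IsProbabilityMeasure ν := Measure.isProbabilityMeasure_map hT.aemeasurable
  haveI : IsProbabilityMeasure ρ := Measure.isProbabilityMeasure_map hC.aemeasurable
  -- CDF facts
  have hQ' : ∀ s, Q s = (ρ (Set.Iic s)).toReal := by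
    intro s
    rw [hQ, hρ_def, Measure.map_apply hC measurableSet_Iic]
    rfl
  have hQm' : ∀ u, Qm u = (ρ (Set.Iio u)).toReal := by
    intro u
    rw [hQm, leftLim_cdf_eq ρ Q hQ' u]
  -- the function u ↦ ρ (Ici u)
  have hρIci : ∀ u, ρ (Set.Ici u) = 1 - ρ (Set.Iio u) := by
    intro u
    have := measure_compl (measurableSet_Iio (a := u)) (measure_ne_top ρ _)
    rw [compl_Iio] at this
    rw [this, measure_univ]
  have hint_eq : ∀ u, 1 - Qm u = (ρ (Set.Ici u)).toReal := by
    intro u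
    rw [hQm', hρIci]
    rw [ENNReal.toReal_sub_of_le prob_le_one ENNReal.one_ne_top]
    simp
  -- measurability of u ↦ ρ (Ici u)
  have hanti : Antitone fun u : ℝ => ρ (Set.Ici u) := fun a b hab =>
    measure_mono (Ici_subset_Ici.2 hab)
  have hmeas : Measurable fun u : ℝ => ρ (Set.Ici u) := hanti.measurable
  -- set equality
  have hset : {ω | min (T ω) (C ω) ≤ t ∧ T ω ≤ C ω} = {ω | T ω ≤ t ∧ T ω ≤ C ω} := by
    ext ω
    simp only [Set.mem_setOf_eq]
    constructor
    · rintro ⟨h1, h2⟩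
      rw [min_eq_left h2] at h1
      exact ⟨h1, h2⟩
    · rintro ⟨h1, h2⟩
      rw [min_eq_left h2]
      exact ⟨h1, h2⟩
  -- product measure
  have hmap : μ.map (fun ω => (T ω, C ω)) = ν.prod ρ :=
    (indepFun_iff_map_prod_eq_prod_map_map hT.aemeasurable hC.aemeasurable).1 h_indep
  set S : Set (ℝ × ℝ) := {p | p.1 ≤ t ∧ p.1 ≤ p.2} with hS_def
  have hSmeas : MeasurableSet S := by
    have : S = {p : ℝ × ℝ | p.1 ≤ t} ∩ {p : ℝ × ℝ | p.1 ≤ p.2} := rfl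
    rw [this]
    exact (measurableSet_le measurable_fst measurable_const).inter
      (measurableSet_le measurable_fst measurable_snd)
  have hμS : μ {ω | T ω ≤ t ∧ T ω ≤ C ω} = (ν.prod ρ) S := by
    rw [← hmap, Measure.map_apply (hT.prodMk hC) hSmeas]
    rfl
  -- compute product measure via sections
  have hsection : ∀ u : ℝ, ρ (Prod.mk u ⁻¹' S) =
      (Set.Iic t).indicator (fun u => ρ (Set.Ici u)) u := by
    intro u
    by_cases hu : u ≤ t
    · rw [Set.indicator_of_mem (Set.mem_Iic.2 hu)]
      congr 1
      ext v
      simp [hS_def, hu]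
    · rw [Set.indicator_of_notMem (by simpa using hu)]
      convert measure_empty (μ := ρ)
      ext v
      simp [hS_def, hu]
  have hprod : (ν.prod ρ) S = ∫⁻ u in Set.Iic t, ρ (Set.Ici u) ∂ν := by
    rw [Measure.prod_apply hSmeas]
    rw [← lintegral_indicator measurableSet_Iic]
    exact lintegral_congr hsection
  -- reduce Iic t to Icc 0 t
  have hν0 : ν (Set.Iio 0) = 0 := by
    rw [hν_def, Measure.map_apply hT measurableSet_Iio]
    convert measure_empty (μ := μ)
    ext ω
    simp only [Set.mem_preimage, mem_Iio, Set.mem_empty_iff_false, iff_false, not_lt]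
    exact hT_nonneg ω
  have hae : Set.Iic t =ᵐ[ν] Set.Icc 0 t := by
    rw [MeasureTheory.ae_eq_set]
    constructor
    · refine measure_mono_null ?_ hν0
      intro x hx
      simp only [Set.mem_diff, mem_Iic, mem_Icc, not_and] at hx
      exact mem_Iio.2 (lt_of_not_ge fun h => (hx.2 h) hx.1)
    · rw [Set.diff_eq_empty.2 Set.Icc_subset_Iic_self]
      exact measure_empty
  rw [setLIntegral_congr hae] at hprod
  have hbochner : ∫ u in Set.Icc 0 t, (1 - Qm u) ∂ν
      = (∫⁻ u in Set.Icc 0 t, ρ (Set.Ici u) ∂ν).toReal := by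
    rw [show (fun u => 1 - Qm u) = fun u => (ρ (Set.Ici u)).toReal from funext hint_eq]
    exact integral_toReal hmeas.aemeasurable (ae_of_all _ fun u => measure_lt_top ρ _)
  rw [hH₁, hset, hμS, hprod, hbochner]
end

section
/- Under conditional independence of T and C given X = x, the conditional cumulative hazard of T, Λ^x(t) = ∫_{[0,t]} (1 − F^x_−(u))^{-1} dF^x(u), equals ∫_{[0,t]} (1 − H^x_−(u))^{-1} dH₁^x(u), where H^x is the conditional distribution of Y = min(T,C) and H₁^x(t) = P(Y ≤ t, Δ = 1 | X = x). -/
open MeasureTheory ProbabilityTheory Filter Set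
open scoped NNReal ENNReal

lemma leftLim_cdf_aux {Ω : Type*} [MeasurableSpace Ω] (μ : Measure Ω) [IsProbabilityMeasure μ]
    (X : Ω → ℝ) (u : ℝ) :
    Function.leftLim (fun v => (μ {ω | X ω ≤ v}).toReal) u = (μ {ω | X ω < u}).toReal := by
  set G : ℝ → ℝ := fun v => (μ {ω | X ω ≤ v}).toReal with hG
  have hmono : Monotone G := by
    intro a b hab
    exact ENNReal.toReal_le_toReal (measure_ne_top μ _) (measure_ne_top μ _) |>.mpr
      (measure_mono (fun ω h => le_trans h hab))
  set s : ℕ → ℝ := fun n => u - 1 / (n + 1) with hs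
  have hs_lt : ∀ n, s n < u := fun n => by
    have : (0:ℝ) < 1 / (n + 1) := by positivity
    simp [hs]; linarith
  have hs_tendsto : Tendsto s atTop (nhdsWithin u (Set.Iio u)) := by
    apply tendsto_nhdsWithin_of_tendsto_nhds_of_eventually_within
    · have : Tendsto (fun n : ℕ => 1 / ((n:ℝ) + 1)) atTop (nhds 0) :=
        tendsto_one_div_add_atTop_nhds_zero_nat
      have h := (tendsto_const_nhds (x := u)).sub this
      simp only [sub_zero] at h
      simpa [hs, one_div] using h
    · exact Filter.Eventually.of_forall fun n => hs_lt n
  have hmono_s : Monotone s := by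
    intro a b hab
    have : 1 / ((b:ℝ) + 1) ≤ 1 / ((a:ℝ) + 1) := by
      apply one_div_le_one_div_of_le (by positivity)
      have : (a:ℝ) ≤ b := Nat.cast_le.mpr hab
      linarith
    simp only [hs]; linarith
  have hunion : {ω | X ω < u} = ⋃ n, {ω | X ω ≤ s n} := by
    ext ω
    simp only [Set.mem_setOf_eq, Set.mem_iUnion]
    constructor
    · intro h
      obtain ⟨n, hn⟩ := exists_nat_one_div_lt (show (0:ℝ) < u - X ω by linarith)
      exact ⟨n, by simp only [hs]; linarith⟩
    · rintro ⟨n, hn⟩; exact lt_of_le_of_lt hn (hs_lt n)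
  have hmeas_tendsto : Tendsto (fun n => μ {ω | X ω ≤ s n}) atTop (nhds (μ {ω | X ω < u})) := by
    rw [hunion]
    exact tendsto_measure_iUnion_atTop (fun a b hab => fun ω h => le_trans h (hmono_s hab))
  have h1 : Tendsto (fun n => G (s n)) atTop (nhds ((μ {ω | X ω < u}).toReal)) :=
    (ENNReal.tendsto_toReal (measure_ne_top μ _)).comp hmeas_tendsto
  have h2 : Tendsto (fun n => G (s n)) atTop (nhds (Function.leftLim G u)) :=
    (hmono.tendsto_leftLim u).comp hs_tendsto
  exact tendsto_nhds_unique h2 h1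


/-- Under (conditional) independence of `T` and `C` given `X = x`, with strictly positive
left-continuous survival factors on `[0,t]`, the conditional cumulative hazard of `T`,
`Λ(t) = ∫_{[0,t]} (1 − F₋(u))⁻¹ dF(u)`, equals `∫_{[0,t]} (1 − H₋(u))⁻¹ dH₁(u)`,
where `dF` is the law of `T`, `H` is the CDF of `Y = min(T,C)`, `H₋, F₋, Q₋` are left limits,
and `dH₁` is the subdistribution measure of `(Y, Δ = 1)`, i.e. the law of `Y` restricted to
the event `{T ≤ C}`. -/
theorem stmt_4 {Ω : Type*} [MeasurableSpace Ω] (μ : Measure Ω) [IsProbabilityMeasure μ]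
    (T C : Ω → ℝ) (hT : Measurable T) (hC : Measurable C)
    (hT_nonneg : ∀ ω, 0 ≤ T ω) (hC_nonneg : ∀ ω, 0 ≤ C ω)
    (h_indep : IndepFun T C μ)
    (F Q H Fm Qm Hm : ℝ → ℝ)
    (hF : ∀ u, F u = (μ {ω | T ω ≤ u}).toReal)
    (hQ : ∀ u, Q u = (μ {ω | C ω ≤ u}).toReal)
    (hH : ∀ u, H u = (μ {ω | min (T ω) (C ω) ≤ u}).toReal)
    (hFm : ∀ u, Fm u = Function.leftLim F u)
    (hQm : ∀ u, Qm u = Function.leftLim Q u)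
    (hHm : ∀ u, Hm u = Function.leftLim H u)
    (t : ℝ)
    (h_pos : ∀ u, 0 ≤ u → u ≤ t → 0 < 1 - Fm u ∧ 0 < 1 - Qm u) :
    ∫ u in Set.Icc 0 t, (1 - Fm u)⁻¹ ∂(Measure.map T μ)
      = ∫ u in Set.Icc 0 t, (1 - Hm u)⁻¹
          ∂(Measure.map (fun ω => min (T ω) (C ω)) (μ.restrict {ω | T ω ≤ C ω})) := by
  -- identify left limits with strict-inequality probabilities
  have hFm' : ∀ u, Fm u = (μ {ω | T ω < u}).toReal := by
    intro u
    rw [hFm, funext hF]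
    exact leftLim_cdf_aux μ T u
  have hQm' : ∀ u, Qm u = (μ {ω | C ω < u}).toReal := by
    intro u
    rw [hQm, funext hQ]
    exact leftLim_cdf_aux μ C u
  have hHm' : ∀ u, Hm u = (μ {ω | min (T ω) (C ω) < u}).toReal := by
    intro u
    rw [hHm, funext hH]
    exact leftLim_cdf_aux μ (fun ω => min (T ω) (C ω)) u
  -- survival forms
  have compl_toReal : ∀ (s : Set Ω), MeasurableSet s → 1 - (μ s).toReal = (μ sᶜ).toReal := by
    intro s hs
    rw [measure_compl hs (measure_ne_top μ s), measure_univ,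
      ENNReal.toReal_sub_of_le prob_le_one ENNReal.one_ne_top, ENNReal.toReal_one]
  have hFsurv : ∀ u, 1 - Fm u = (μ {ω | u ≤ T ω}).toReal := by
    intro u
    have hset : {ω | T ω < u}ᶜ = {ω | u ≤ T ω} := by ext ω; simp [not_lt]
    rw [hFm', compl_toReal _ (measurableSet_lt hT measurable_const), hset]
  have hQsurv : ∀ u, 1 - Qm u = (μ {ω | u ≤ C ω}).toReal := by
    intro u
    have hset : {ω | C ω < u}ᶜ = {ω | u ≤ C ω} := by ext ω; simp [not_lt]
    rw [hQm', compl_toReal _ (measurableSet_lt hC measurable_const), hset]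
  have hHsurv : ∀ u, 1 - Hm u = (μ {ω | u ≤ min (T ω) (C ω)}).toReal := by
    intro u
    have hset : {ω | min (T ω) (C ω) < u}ᶜ = {ω | u ≤ min (T ω) (C ω)} := by
      ext ω; simp [not_lt]
    rw [hHm', compl_toReal _ (measurableSet_lt (hT.min hC) measurable_const), hset]
  -- independence factorization of the minimum's survival function
  have hfact : ∀ u, 1 - Hm u = (1 - Fm u) * (1 - Qm u) := by
    intro u
    rw [hHsurv, hFsurv, hQsurv, ← ENNReal.toReal_mul]
    congr 1
    have h := h_indep.measure_inter_preimage_eq_mul (Set.Ici u) (Set.Ici u)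
      measurableSet_Ici measurableSet_Ici
    have hset : {ω | u ≤ min (T ω) (C ω)} = T ⁻¹' Set.Ici u ∩ C ⁻¹' Set.Ici u := by
      ext ω; simp [le_min_iff, Set.mem_preimage]
    rw [hset, h]
    rfl
  -- the subdistribution measure is a density against the law of T
  set ν : Measure ℝ := Measure.map T μ with hν
  set g : ℝ → ℝ≥0 := fun s => (μ {ω | s ≤ C ω}).toNNReal with hg
  have hg_meas : Measurable g := by
    have h1 : Antitone (fun s : ℝ => μ {ω | s ≤ C ω}) := by
      intro a b hab
      exact measure_mono (fun ω h => le_trans hab h)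
    exact ENNReal.measurable_toNNReal.comp h1.measurable
  have hg_coe : ∀ s, ((g s : ℝ≥0∞)) = μ {ω | s ≤ C ω} := fun s =>
    ENNReal.coe_toNNReal (measure_ne_top μ _)
  have hmap : Measure.map (fun ω => min (T ω) (C ω)) (μ.restrict {ω | T ω ≤ C ω})
      = ν.withDensity (fun s => (g s : ℝ≥0∞)) := by
    ext A hA
    rw [Measure.map_apply (hT.min hC) hA,
      Measure.restrict_apply ((hT.min hC) hA),
      withDensity_apply _ hA]
    have hset : (fun ω => min (T ω) (C ω)) ⁻¹' A ∩ {ω | T ω ≤ C ω}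
        = (fun ω => (T ω, C ω)) ⁻¹' {p : ℝ × ℝ | p.1 ∈ A ∧ p.1 ≤ p.2} := by
      ext ω
      simp only [Set.mem_inter_iff, Set.mem_preimage, Set.mem_setOf_eq]
      constructor
      · rintro ⟨h1, h2⟩; exact ⟨by rwa [min_eq_left h2] at h1, h2⟩
      · rintro ⟨h1, h2⟩; exact ⟨by rwa [min_eq_left h2], h2⟩
    rw [hset]
    have hS : MeasurableSet {p : ℝ × ℝ | p.1 ∈ A ∧ p.1 ≤ p.2} :=
      (measurable_fst hA).inter (measurableSet_le measurable_fst measurable_snd)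
    rw [← Measure.map_apply (hT.prodMk hC) hS,
      (indepFun_iff_map_prod_eq_prod_map_map hT.aemeasurable hC.aemeasurable).mp h_indep,
      Measure.prod_apply hS]
    have hker : ∀ s : ℝ, (Measure.map C μ) (Prod.mk s ⁻¹' {p : ℝ × ℝ | p.1 ∈ A ∧ p.1 ≤ p.2})
        = A.indicator (fun s => (g s : ℝ≥0∞)) s := by
      intro s
      by_cases hs : s ∈ A
      · have : Prod.mk s ⁻¹' {p : ℝ × ℝ | p.1 ∈ A ∧ p.1 ≤ p.2} = Set.Ici s := by
          ext c; simp [hs]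
        rw [this, Measure.map_apply hC measurableSet_Ici, Set.indicator_of_mem hs, hg_coe]
        rfl
      · have : Prod.mk s ⁻¹' {p : ℝ × ℝ | p.1 ∈ A ∧ p.1 ≤ p.2} = ∅ := by
          ext c; simp [hs]
        rw [this, Set.indicator_of_notMem hs]
        simp
    simp_rw [hker]
    exact lintegral_indicator hA _
  -- rewrite the RHS via the density
  rw [hmap]
  rw [show ∫ u in Set.Icc 0 t, (1 - Hm u)⁻¹ ∂(ν.withDensity fun s => (g s : ℝ≥0∞))
      = ∫ u, (1 - Hm u)⁻¹ ∂((ν.restrict (Set.Icc 0 t)).withDensity fun s => (g s : ℝ≥0∞)) by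
    rw [restrict_withDensity measurableSet_Icc]]
  rw [integral_withDensity_eq_integral_smul hg_meas]
  refine (setIntegral_congr_fun measurableSet_Icc ?_).symm
  intro u hu
  obtain ⟨hF_pos, hQ_pos⟩ := h_pos u hu.1 hu.2
  have hgu : (g u : ℝ) = 1 - Qm u := by
    rw [hQsurv, hg]
    simp [ENNReal.coe_toNNReal_eq_toReal]
  show g u • (1 - Hm u)⁻¹ = (1 - Fm u)⁻¹
  rw [NNReal.smul_def, smul_eq_mul, hgu, hfact, mul_inv]
  field_simp
end
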